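/- Let p ≥ 7 be prime and a ∈ [3,p-3], with a even. Then for all sufficiently large even k with k ≡ 1 (mod p), the unique (up to invertible affine transformations of Z_p) a-subset A minimizing s_k(A) is the interval {0,1,...,a-1}. -/

import Mathlib

open Finset Complex Real

noncomputable def zet (p : ℕ) : ℂ := Complex.exp (2 * π * I / p)

noncomputable def ec (p : ℕ) (x : ZMod p) : ℂ := zet p ^ x.val

noncomputable def Fc {p : ℕ} (A : Finset (ZMod p)) (t : ZMod p) : ℂ := ∑ x ∈ A, ec p (t * x)

lemma zet_prim (p : ℕ) (hp : p ≠ 0) : IsPrimitiveRoot (zet p) p :=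
  Complex.isPrimitiveRoot_exp p hp

lemma zet_pow_p (p : ℕ) (hp : p ≠ 0) : zet p ^ p = 1 := (zet_prim p hp).pow_eq_one

lemma zet_norm (p : ℕ) : ‖zet p‖ = 1 := by
  have : zet p = Complex.exp ((2 * π / p : ℝ) * I) := by
    unfold zet; push_cast; ring_nf
  rw [this, Complex.norm_exp_ofReal_mul_I]

lemma zet_pow_mod (p : ℕ) (hp : p ≠ 0) (n : ℕ) : zet p ^ (n % p) = zet p ^ n := by
  conv_rhs => rw [← Nat.div_add_mod n p]
  rw [pow_add, pow_mul, zet_pow_p p hp, one_pow, one_mul]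

lemma ec_zero (p : ℕ) [NeZero p] : ec p 0 = 1 := by
  simp [ec, ZMod.val_zero]

lemma ec_add (p : ℕ) [NeZero p] (x y : ZMod p) : ec p (x + y) = ec p x * ec p y := by
  have hp : p ≠ 0 := NeZero.ne p
  rw [ec, ec, ec, ZMod.val_add, zet_pow_mod p hp, pow_add]

lemma ec_norm (p : ℕ) (x : ZMod p) : ‖ec p x‖ = 1 := by
  rw [ec, norm_pow, zet_norm, one_pow]

lemma ec_ne_zero (p : ℕ) (x : ZMod p) : ec p x ≠ 0 := by
  intro h
  have := ec_norm p x
  rw [h] at this; simp at this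

lemma ec_neg (p : ℕ) [NeZero p] (x : ZMod p) : ec p (-x) = (starRingEnd ℂ) (ec p x) := by
  have h1 : ec p (-x) * ec p x = 1 := by rw [← ec_add]; simp [ec_zero]
  have h2 : (starRingEnd ℂ) (ec p x) * ec p x = 1 := by
    rw [mul_comm, Complex.mul_conj]
    norm_cast
    rw [Complex.normSq_eq_norm_sq]
    have := ec_norm p x
    rw [this]; norm_num
  have := h1.trans h2.symm
  exact mul_right_cancel₀ (ec_ne_zero p x) this

lemma ec_sum (p : ℕ) [NeZero p] {ι : Type*} (s : Finset ι) (f : ι → ZMod p) :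
    ec p (∑ i ∈ s, f i) = ∏ i ∈ s, ec p (f i) := by
  induction s using Finset.cons_induction with
  | empty => simp [ec_zero]
  | cons i s hi ih => rw [Finset.sum_cons, Finset.prod_cons, ec_add, ih]

lemma ec_inj (p : ℕ) [NeZero p] {x y : ZMod p} (h : ec p x = ec p y) : x = y := by
  have hp : p ≠ 0 := NeZero.ne p
  have := (zet_prim p hp).pow_inj (ZMod.val_lt x) (ZMod.val_lt y) h
  exact ZMod.val_injective p this

lemma sum_ec (p : ℕ) [NeZero p] (hp : 1 < p) : ∑ t : ZMod p, ec p t = 0 := by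
  have h : ∑ t : ZMod p, ec p t = ∑ j ∈ range p, zet p ^ j :=
    Finset.sum_nbij' (fun t => t.val) (fun n => (n : ZMod p))
      (fun t _ => Finset.mem_range.mpr (ZMod.val_lt t))
      (fun n _ => Finset.mem_univ _)
      (fun t _ => (ZMod.natCast_val t).trans (ZMod.cast_id _ _))
      (fun n hn => ZMod.val_cast_of_lt (Finset.mem_range.mp hn))
      (fun t _ => rfl)
  rw [h]
  exact (zet_prim p (by omega)).geom_sum_eq_zero hp

lemma sum_ec_mul (p : ℕ) [NeZero p] (hp : p.Prime) (y : ZMod p) :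
    ∑ t : ZMod p, ec p (t * y) = if y = 0 then (p : ℂ) else 0 := by
  haveI : Fact p.Prime := ⟨hp⟩
  by_cases hy : y = 0
  · simp [hy, ec_zero, Finset.card_univ]
  · rw [if_neg hy]
    have : ∑ t : ZMod p, ec p (t * y) = ∑ u : ZMod p, ec p u := by
      apply Fintype.sum_bijective (fun t : ZMod p => t * y)
      · exact (mulRight_bijective₀ y hy)
      · intro t; rfl
    rw [this]
    exact sum_ec p hp.one_lt
/-- `skcount k A`: number of `(k+1)`-tuples of elements of `A` with `x 0 = x 1 + ... + x k`. -/
def skcount {p : ℕ} (k : ℕ) (A : Finset (ZMod p)) : ℕ :=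
  ((Fintype.piFinset (fun _ : Fin (k + 1) => A)).filter
    (fun x => x 0 = ∑ i : Fin k, x i.succ)).card

/-- The interval `[a] = {0, 1, ..., a-1}` in `ZMod p`. -/
def initInterval (p a : ℕ) : Finset (ZMod p) :=
  (Finset.range a).image (fun j : ℕ => (j : ZMod p))
-- Fourier identity and affine invariance
section Fourier
variable {p : ℕ} [NeZero p]

/-- `skcount` as a count of `(head, tail)` pairs. -/
lemma skcount_eq_card (k : ℕ) (A : Finset (ZMod p)) :
    skcount k A =
      ((Fintype.piFinset (fun _ : Fin k => A)).filter
        (fun g => (∑ i : Fin k, g i) ∈ A)).card := by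
  unfold skcount
  apply Finset.card_nbij' (i := fun x => fun i : Fin k => x i.succ)
    (j := fun g => Fin.cons (∑ i : Fin k, g i) g)
  · intro x hx
    rw [Finset.mem_coe, Finset.mem_filter, Fintype.mem_piFinset] at hx ⊢
    obtain ⟨⟨h1, h2⟩⟩ := And.intro hx trivial
    refine ⟨fun i => h1 i.succ, ?_⟩
    rw [← h2]; exact h1 0
  · intro g hg
    rw [Finset.mem_coe, Finset.mem_filter, Fintype.mem_piFinset] at hg ⊢
    refine ⟨fun i => ?_, ?_⟩
    · refine Fin.cases ?_ ?_ i
      · simpa using hg.2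
      · intro j; simpa using hg.1 j
    · simp [Fin.cons_zero, Fin.cons_succ]
  · intro x hx
    rw [Finset.mem_coe, Finset.mem_filter] at hx
    funext i
    refine Fin.cases ?_ ?_ i
    · simp [Fin.cons_zero, ← hx.2]
    · intro j; simp [Fin.cons_succ]
  · intro g hg
    funext i
    simp [Fin.cons_succ]

lemma fourier_identity (hp : p.Prime) (k : ℕ) (A : Finset (ZMod p)) :
    (p : ℂ) * (skcount k A : ℂ) = ∑ t : ZMod p, Fc A t ^ k * Fc A (-t) := by
  haveI : NeZero p := ⟨hp.pos.ne'⟩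
  have hFpow : ∀ t : ZMod p, Fc A t ^ k =
      ∑ g ∈ Fintype.piFinset (fun _ : Fin k => A), ec p (t * ∑ i : Fin k, g i) := by
    intro t
    have h1 : Fc A t ^ k = ∏ _i : Fin k, Fc A t := by
      rw [Finset.prod_const, Finset.card_univ, Fintype.card_fin]
    rw [h1]
    unfold Fc
    rw [Finset.prod_univ_sum]
    refine Finset.sum_congr rfl (fun g _ => ?_)
    rw [Finset.mul_sum, ec_sum]
  symm
  calc ∑ t : ZMod p, Fc A t ^ k * Fc A (-t)
      = ∑ t : ZMod p, ∑ g ∈ Fintype.piFinset (fun _ : Fin k => A), ∑ x0 ∈ A,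
          ec p (t * ∑ i : Fin k, g i) * ec p (-t * x0) := by
        refine Finset.sum_congr rfl (fun t _ => ?_)
        rw [hFpow]
        unfold Fc
        rw [Finset.sum_mul]
        exact Finset.sum_congr rfl (fun g _ => by rw [Finset.mul_sum])
    _ = ∑ g ∈ Fintype.piFinset (fun _ : Fin k => A), ∑ x0 ∈ A, ∑ t : ZMod p,
          ec p (t * ((∑ i : Fin k, g i) - x0)) := by
        rw [Finset.sum_comm]
        refine Finset.sum_congr rfl (fun g _ => ?_)
        rw [Finset.sum_comm]
        refine Finset.sum_congr rfl (fun x0 _ => ?_)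
        refine Finset.sum_congr rfl (fun t _ => ?_)
        rw [← ec_add]
        congr 1
        ring
    _ = ∑ g ∈ Fintype.piFinset (fun _ : Fin k => A), ∑ x0 ∈ A,
          (if (∑ i : Fin k, g i) - x0 = 0 then (p : ℂ) else 0) := by
        refine Finset.sum_congr rfl (fun g _ => Finset.sum_congr rfl (fun x0 _ => ?_))
        rw [sum_ec_mul p hp]
    _ = ∑ g ∈ Fintype.piFinset (fun _ : Fin k => A),
          (if (∑ i : Fin k, g i) ∈ A then (p : ℂ) else 0) := by
        refine Finset.sum_congr rfl (fun g _ => ?_)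
        have : ∀ x0 : ZMod p, ((∑ i : Fin k, g i) - x0 = 0) ↔ ((∑ i : Fin k, g i) = x0) := by
          intro x0; rw [sub_eq_zero]
        simp_rw [this]
        rw [Finset.sum_ite_eq (A) (∑ i : Fin k, g i) (fun _ => (p:ℂ))]
    _ = (p : ℂ) * (skcount k A : ℂ) := by
        rw [← Finset.sum_filter, Finset.sum_const, skcount_eq_card k A]
        simp [mul_comm]

lemma skcount_affine (hp : p.Prime) {k : ℕ} (hk : (k : ZMod p) = 1)
    {ξ η : ZMod p} (hξ : ξ ≠ 0) (A : Finset (ZMod p)) :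
    skcount k (A.image (fun x => ξ * x + η)) = skcount k A := by
  haveI : Fact p.Prime := ⟨hp⟩
  symm
  apply Finset.card_nbij' (i := fun x => fun i : Fin (k+1) => ξ * x i + η)
    (j := fun y => fun i : Fin (k+1) => ξ⁻¹ * (y i - η))
  · intro x hx
    rw [Finset.mem_coe, Finset.mem_filter, Fintype.mem_piFinset] at hx ⊢
    refine ⟨fun i => Finset.mem_image_of_mem _ (hx.1 i), ?_⟩
    have h2 := hx.2
    rw [Finset.sum_add_distrib, ← Finset.mul_sum, Finset.sum_const, Finset.card_univ,
      Fintype.card_fin, nsmul_eq_mul, hk, one_mul, ← h2]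
  · intro y hy
    rw [Finset.mem_coe, Finset.mem_filter, Fintype.mem_piFinset] at hy ⊢
    refine ⟨fun i => ?_, ?_⟩
    · obtain ⟨b, hb, hby⟩ := Finset.mem_image.mp (hy.1 i)
      show ξ⁻¹ * (y i - η) ∈ A
      rw [← hby]
      have : ξ⁻¹ * (ξ * b + η - η) = b := by field_simp; ring
      rw [this]; exact hb
    · have h2 := hy.2
      rw [← Finset.mul_sum]
      congr 1
      rw [Finset.sum_sub_distrib, Finset.sum_const, Finset.card_univ, Fintype.card_fin,
        nsmul_eq_mul, hk, one_mul, ← h2]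
  · intro x _; funext i; field_simp; ring
  · intro y _; funext i; field_simp; ring

end Fourier
-- Arcs in ZMod p and superlevel sets of cosine
section Arc
variable {p : ℕ}

lemma natCast_injOn_lt {i i' : ℕ} (hi : i < p) (hi' : i' < p)
    (h : (i : ZMod p) = (i' : ZMod p)) : i = i' := by
  haveI : NeZero p := ⟨by omega⟩
  have hv := congrArg ZMod.val h
  rwa [ZMod.val_cast_of_lt hi, ZMod.val_cast_of_lt hi'] at hv


lemma intCast_val_cast [NeZero p] (y : ZMod p) : ((y.val : ℤ) : ZMod p) = y := by
  rw [Int.cast_natCast, ZMod.natCast_val, ZMod.cast_id]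

lemma arc_card (η : ZMod p) {n : ℕ} (hn : n ≤ p) :
    ((Finset.range n).image (fun j : ℕ => η + (j : ZMod p))).card = n := by
  rw [Finset.card_image_of_injOn, Finset.card_range]
  intro i hi i' hi' h
  simp only [Finset.coe_range, Set.mem_Iio] at hi hi'
  have : (i : ZMod p) = (i' : ZMod p) := by
    have := add_left_cancel h
    exact this
  exact natCast_injOn_lt (lt_of_lt_of_le hi hn) (lt_of_lt_of_le hi' hn) this

lemma initInterval_card {a : ℕ} (ha : a ≤ p) : (initInterval p a).card = a := by
  have h : initInterval p a = (Finset.range a).image (fun j : ℕ => (0:ZMod p) + (j : ZMod p)) := by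
    unfold initInterval; simp
  rw [h, arc_card _ ha]

lemma range_p_image_cast [NeZero p] :
    (Finset.range p).image (fun j : ℕ => (j : ZMod p)) = Finset.univ := by
  apply Finset.eq_univ_of_forall
  intro x
  exact Finset.mem_image.mpr ⟨x.val, Finset.mem_range.mpr (ZMod.val_lt x),
    (ZMod.natCast_val x).trans (ZMod.cast_id _ _)⟩

open Real in
lemma cos_gt_iff_dist {w : ℝ} (hw0 : 0 < w) (hwpi : w ≤ π) (u : ℝ) :
    Real.cos w < Real.cos u ↔ ∃ m : ℤ, |u - 2*π*m| < w := by
  constructor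
  · intro h
    refine ⟨round (u / (2*π)), ?_⟩
    have hd : |u - 2*π*(round (u / (2*π)))| ≤ π := by
      have h1 : |u / (2*π) - round (u / (2*π))| ≤ 1/2 := abs_sub_round _
      have h2 : (0:ℝ) < 2*π := by positivity
      have hexp : u - 2*π*(round (u / (2*π))) = (2*π) * (u / (2*π) - round (u / (2*π))) := by
        field_simp
      rw [hexp, abs_mul, abs_of_pos h2]
      calc 2*π * |u / (2*π) - round (u / (2*π))| ≤ 2*π * (1/2) := by
            apply mul_le_mul_of_nonneg_left h1 (le_of_lt h2)
        _ = π := by ring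
    by_contra hc
    push_neg at hc
    have hcos : Real.cos u = Real.cos |u - 2*π*(round (u / (2*π)))| := by
      rw [Real.cos_abs]
      rw [show u - 2*π*(round (u / (2*π))) = u - (round (u / (2*π))) * (2*π) by ring]
      rw [Real.cos_sub_int_mul_two_pi]
    rw [hcos] at h
    have : Real.cos |u - 2*π*(round (u / (2*π)))| ≤ Real.cos w :=
      Real.cos_le_cos_of_nonneg_of_le_pi (le_of_lt hw0) hd hc
    linarith
  · rintro ⟨m, hm⟩
    have hcos : Real.cos u = Real.cos |u - 2*π*m| := by
      rw [Real.cos_abs, show u - 2*π*m = u - m * (2*π) by ring, Real.cos_sub_int_mul_two_pi]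
    rw [hcos]
    exact Real.cos_lt_cos_of_nonneg_of_le_pi (abs_nonneg _) hwpi hm

lemma int_Ioo_image_cast (L H : ℤ) :
    (Finset.Ioo L H).image (fun j : ℤ => (j : ZMod p)) =
    (Finset.range (H - L - 1).toNat).image
      (fun i : ℕ => ((L+1 : ℤ) : ZMod p) + (i : ZMod p)) := by
  ext x
  simp only [Finset.mem_image, Finset.mem_Ioo, Finset.mem_range]
  constructor
  · rintro ⟨j, ⟨h1, h2⟩, rfl⟩
    refine ⟨(j - L - 1).toNat, by omega, ?_⟩
    have hc : (((j - L - 1).toNat : ℕ) : ZMod p) = ((j - L - 1 : ℤ) : ZMod p) := by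
      rw [← Int.cast_natCast]
      congr 1
      exact Int.toNat_of_nonneg (by omega)
    rw [hc]
    push_cast
    ring
  · rintro ⟨i, hi, rfl⟩
    refine ⟨L + 1 + i, ⟨by omega, by omega⟩, ?_⟩
    push_cast
    ring

open Real in
lemma cos_superlevel_arc [NeZero p] (hp1 : 1 < p) (c φ : ℝ) :
    ∃ (η : ZMod p) (n : ℕ), n ≤ p ∧
      (Finset.univ.filter (fun x : ZMod p => c < Real.cos (2*π*(x.val : ℝ)/p - φ))) =
      (Finset.range n).image (fun j : ℕ => η + (j : ZMod p)) := by
  have hppos : (0:ℝ) < p := by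
    have : 0 < p := by omega
    exact_mod_cast this
  by_cases hc1 : 1 ≤ c
  · refine ⟨0, 0, by omega, ?_⟩
    rw [Finset.filter_false_of_mem, Finset.range_zero, Finset.image_empty]
    intro x _
    push_neg
    exact le_trans (Real.cos_le_one _) hc1
  by_cases hcm : c < -1
  · refine ⟨0, p, le_refl p, ?_⟩
    rw [Finset.filter_true_of_mem]
    · simp only [zero_add]
      exact range_p_image_cast.symm
    · intro x _
      exact lt_of_lt_of_le hcm (Real.neg_one_le_cos _)
  push_neg at hc1 hcm
  -- now -1 ≤ c < 1
  set w := Real.arccos c with hw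
  have hw0 : 0 < w := Real.arccos_pos.mpr hc1
  have hwpi : w ≤ π := Real.arccos_le_pi c
  have hcw : Real.cos w = c := Real.cos_arccos hcm (le_of_lt hc1)
  set β := φ / (2*π) with hβ
  set w' := w / (2*π) with hw'
  have h2pi : (0:ℝ) < 2*π := by positivity
  have hw'pos : 0 < w' := div_pos hw0 h2pi
  have hw'half : w' ≤ 1/2 := by
    rw [hw']
    rw [div_le_div_iff₀ h2pi (by norm_num : (0:ℝ) < 2)] at *
    nlinarith [Real.pi_pos]
  set L := ⌊(p:ℝ)*β - p*w'⌋ with hL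
  set H := ⌈(p:ℝ)*β + p*w'⌉ with hH
  refine ⟨((L+1 : ℤ) : ZMod p), (H - L - 1).toNat, ?_, ?_⟩
  · -- n ≤ p
    have h1 : (H:ℝ) < (p:ℝ)*β + p*w' + 1 := Int.ceil_lt_add_one _
    have h2 : (p:ℝ)*β - p*w' - 1 < L := Int.sub_one_lt_floor _
    have h3 : (H:ℝ) - L - 1 < 2*(p*w') + 1 := by linarith
    have h4 : (p:ℝ)*w' ≤ p * (1/2) := by
      apply mul_le_mul_of_nonneg_left hw'half (le_of_lt hppos)
    have h5 : (H:ℝ) - L - 1 < p + 1 := by linarith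
    have h6 : (H - L - 1 : ℤ) < (p:ℤ) + 1 := by exact_mod_cast h5
    omega
  · have hkey : ∀ (v : ℝ) (m : ℤ), |2*π*v/p - φ - 2*π*m| < w ↔
        ((p:ℝ)*β - p*w' < v - p*m ∧ v - p*m < (p:ℝ)*β + p*w') := by
      intro v m
      have hpne : (p:ℝ) ≠ 0 := ne_of_gt hppos
      have he : 2*π*v/p - φ - 2*π*m = (2*π/p) * (v - p*β - p*m) := by
        rw [hβ]; field_simp
      have hwe : w = (2*π/p) * ((p:ℝ)*w') := by
        rw [hw']; field_simp
      rw [he, abs_mul, abs_of_pos (by positivity : (0:ℝ) < 2*π/p), hwe,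
        mul_lt_mul_iff_right₀ (by positivity : (0:ℝ) < 2*π/p), abs_lt]
      constructor
      · rintro ⟨h1, h2⟩; exact ⟨by linarith, by linarith⟩
      · rintro ⟨h1, h2⟩; exact ⟨by linarith, by linarith⟩
    rw [← int_Ioo_image_cast]
    ext x
    simp only [Finset.mem_filter, Finset.mem_univ, true_and, Finset.mem_image, Finset.mem_Ioo]
    rw [← hcw, cos_gt_iff_dist hw0 hwpi]
    simp only [hkey]
    constructor
    · rintro ⟨m, hm1, hm2⟩
      refine ⟨(x.val : ℤ) - p * m, ⟨?_, ?_⟩, ?_⟩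
      · rw [Int.floor_lt]; push_cast; linarith
      · rw [Int.lt_ceil]; push_cast; linarith
      · push_cast
        rw [ZMod.natCast_self, ZMod.natCast_val, ZMod.cast_id]
        ring
    · rintro ⟨j, ⟨hj1, hj2⟩, rfl⟩
      have hdvd : (p:ℤ) ∣ (j - ((j : ZMod p).val : ℤ)) := by
        rw [← ZMod.intCast_zmod_eq_zero_iff_dvd]
        rw [Int.cast_sub, intCast_val_cast]
        ring
      obtain ⟨m', hm'⟩ := hdvd
      refine ⟨-m', ?_, ?_⟩
      · rw [Int.floor_lt] at hj1
        have : (j:ℝ) = ((j : ZMod p).val : ℝ) + p * m' := by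
          have hz : (j:ℤ) = ((j : ZMod p).val : ℤ) + p * m' := by omega
          exact_mod_cast congrArg (fun z : ℤ => (z:ℝ)) hz
        push_cast
        linarith [this]
      · rw [Int.lt_ceil] at hj2
        have : (j:ℝ) = ((j : ZMod p).val : ℝ) + p * m' := by
          have hz : (j:ℤ) = ((j : ZMod p).val : ℤ) + p * m' := by omega
          exact_mod_cast congrArg (fun z : ℤ => (z:ℝ)) hz
        push_cast
        linarith [this]

end Arc
-- Extremal: maximizers of the exponential sum are arcs
section Extremal
open Real
variable {p : ℕ}

noncomputable def esum (p : ℕ) (C : Finset (ZMod p)) : ℂ := ∑ x ∈ C, ec p x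

lemma esum_initInterval {a : ℕ} (hap : a ≤ p) :
    esum p (initInterval p a) = ∑ j ∈ Finset.range a, zet p ^ j := by
  unfold esum initInterval
  rw [Finset.sum_image]
  · refine Finset.sum_congr rfl (fun j hj => ?_)
    have hjp : j < p := lt_of_lt_of_le (Finset.mem_range.mp hj) hap
    unfold ec
    rw [ZMod.val_cast_of_lt hjp]
  · intro i hi i' hi' h
    exact natCast_injOn_lt (lt_of_lt_of_le (Finset.mem_range.mp hi) hap)
      (lt_of_lt_of_le (Finset.mem_range.mp hi') hap) h

lemma esum_init_ne_zero (hp : p ≠ 0) {a : ℕ} (ha0 : 0 < a) (hap : a < p) :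
    esum p (initInterval p a) ≠ 0 := by
  rw [esum_initInterval (le_of_lt hap)]
  intro h
  have h1 : (∑ j ∈ Finset.range a, zet p ^ j) * (zet p - 1) = zet p ^ a - 1 := geom_sum_mul _ _
  rw [h, zero_mul] at h1
  have h2 : zet p ^ a ≠ 1 := (zet_prim p hp).pow_ne_one_of_pos_of_lt ha0.ne' hap
  exact h2 (sub_eq_zero.mp h1.symm)

lemma esum_arc {n : ℕ} (hn : n ≤ p) [NeZero p] (η : ZMod p) :
    esum p ((Finset.range n).image (fun j : ℕ => η + (j : ZMod p))) =
      ec p η * ∑ j ∈ Finset.range n, zet p ^ j := by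
  unfold esum
  rw [Finset.sum_image]
  · rw [Finset.mul_sum]
    refine Finset.sum_congr rfl (fun j hj => ?_)
    have hjp : j < p := lt_of_lt_of_le (Finset.mem_range.mp hj) hn
    rw [ec_add]
    congr 1
    unfold ec
    rw [ZMod.val_cast_of_lt hjp]
  · intro i hi i' hi' h
    exact natCast_injOn_lt (lt_of_lt_of_le (Finset.mem_range.mp hi) hn)
      (lt_of_lt_of_le (Finset.mem_range.mp hi') hn) (add_left_cancel h)

lemma esum_arc_norm {n : ℕ} (hn : n ≤ p) [NeZero p] (η : ZMod p) :
    ‖esum p ((Finset.range n).image (fun j : ℕ => η + (j : ZMod p)))‖ =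
      ‖esum p (initInterval p n)‖ := by
  rw [esum_arc hn η, esum_initInterval hn, norm_mul, ec_norm, one_mul]

lemma maximal_is_arc (hp : p.Prime) {a : ℕ} (ha0 : 0 < a) (hap : a < p)
    {C : Finset (ZMod p)} (hC : C.card = a)
    (hmax : ∀ B : Finset (ZMod p), B.card = a → ‖esum p B‖ ≤ ‖esum p C‖) :
    ∃ η : ZMod p, C = (Finset.range a).image (fun j : ℕ => η + (j : ZMod p)) := by
  haveI : NeZero p := ⟨hp.pos.ne'⟩
  set σ := esum p C with hσdef
  have hR0 : 0 < ‖esum p (initInterval p a)‖ :=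
    norm_pos_iff.mpr (esum_init_ne_zero hp.pos.ne' ha0 hap)
  have hσpos : 0 < ‖σ‖ :=
    lt_of_lt_of_le hR0 (hmax _ (initInterval_card (le_of_lt hap)))
  have hσne : σ ≠ 0 := norm_pos_iff.mp hσpos
  -- strict top property
  have hstrict : ∀ x ∈ C, ∀ y ∉ C, (σ * (starRingEnd ℂ) (ec p y)).re <
      (σ * (starRingEnd ℂ) (ec p x)).re := by
    intro x hx y hy
    have hxy : x ≠ y := fun h => hy (h ▸ hx)
    set u := ec p y - ec p x with hu
    have hune : u ≠ 0 := by
      rw [hu, sub_ne_zero]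
      intro h
      exact hxy (ec_inj p h.symm)
    set C' := insert y (C.erase x) with hC'
    have hyC' : y ∉ C.erase x := fun h => hy (Finset.mem_of_mem_erase h)
    have hC'card : C'.card = a := by
      rw [hC', Finset.card_insert_of_notMem hyC', Finset.card_erase_of_mem hx, hC]
      omega
    have hesum' : esum p C' = σ + u := by
      rw [hC']
      unfold esum
      rw [Finset.sum_insert hyC', Finset.sum_erase_eq_sub hx, hu, hσdef]
      unfold esum
      ring
    have hle : ‖σ + u‖ ≤ ‖σ‖ := by
      rw [← hesum']
      exact hmax _ hC'card
    have hsq : Complex.normSq (σ + u) ≤ Complex.normSq σ := by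
      rw [Complex.normSq_eq_norm_sq, Complex.normSq_eq_norm_sq]
      exact pow_le_pow_left₀ (norm_nonneg _) hle 2
    have hexp : Complex.normSq (σ + u) =
        Complex.normSq σ + 2 * (σ * (starRingEnd ℂ) u).re + Complex.normSq u := by
      rw [Complex.normSq_add]
      ring
    have husq : 0 < Complex.normSq u := Complex.normSq_pos.mpr hune
    have hkey : (σ * (starRingEnd ℂ) u).re ≤ -(Complex.normSq u) / 2 := by
      nlinarith [hexp, hsq]
    have hsplit : (σ * (starRingEnd ℂ) u).re =
        (σ * (starRingEnd ℂ) (ec p y)).re - (σ * (starRingEnd ℂ) (ec p x)).re := by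
      rw [hu, map_sub, mul_sub, Complex.sub_re]
    nlinarith [hkey, husq, hsplit]
  -- compute g as cosine
  set φ := σ.arg with hφ
  have hσexp : σ = (‖σ‖ : ℂ) * Complex.exp ((φ:ℝ) * Complex.I) := by
    rw [hφ]
    exact (Complex.norm_mul_exp_arg_mul_I σ).symm
  have hg : ∀ x : ZMod p, (σ * (starRingEnd ℂ) (ec p x)).re =
      ‖σ‖ * Real.cos (2*π*(x.val:ℝ)/p - φ) := by
    intro x
    have hpne : (p:ℂ) ≠ 0 := Nat.cast_ne_zero.mpr hp.pos.ne'
    have hecx : ec p x = Complex.exp (((2*π*(x.val:ℝ)/p : ℝ) : ℂ) * Complex.I) := by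
      unfold ec zet
      rw [← Complex.exp_nat_mul]
      congr 1
      push_cast
      field_simp
    have hconjexp : (starRingEnd ℂ) (Complex.exp (((2*π*(x.val:ℝ)/p : ℝ) : ℂ) * Complex.I)) =
        Complex.exp (((-(2*π*(x.val:ℝ)/p) : ℝ) : ℂ) * Complex.I) := by
      rw [← Complex.exp_conj, map_mul, Complex.conj_ofReal, Complex.conj_I]
      push_cast
      ring_nf
    have h1 : σ * (starRingEnd ℂ) (ec p x) =
        (‖σ‖:ℂ) * Complex.exp (((φ - 2*π*(x.val:ℝ)/p : ℝ):ℂ) * Complex.I) := by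
      rw [hecx, hconjexp]
      conv_lhs => rw [hσexp]
      rw [mul_assoc, ← Complex.exp_add]
      congr 2
      push_cast
      ring
    rw [h1, Complex.re_ofReal_mul, Complex.exp_ofReal_mul_I_re, ← neg_sub, Real.cos_neg]
  -- C is a superlevel set
  have hCc : (Finset.univ \ C).Nonempty := by
    rw [Finset.sdiff_nonempty]
    intro hsub
    have hcard := Finset.card_le_card hsub
    rw [hC, Finset.card_univ, ZMod.card] at hcard
    omega
  obtain ⟨y0, hy0mem, hy0max⟩ := Finset.exists_max_image (Finset.univ \ C)
    (fun y => (σ * (starRingEnd ℂ) (ec p y)).re) hCc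
  have hy0C : y0 ∉ C := (Finset.mem_sdiff.mp hy0mem).2
  have hCfilter : C = Finset.univ.filter
      (fun x => (σ * (starRingEnd ℂ) (ec p y0)).re / ‖σ‖ < Real.cos (2*π*(x.val:ℝ)/p - φ)) := by
    ext x
    simp only [Finset.mem_filter, Finset.mem_univ, true_and]
    rw [div_lt_iff₀ hσpos]
    constructor
    · intro hx
      have := hstrict x hx y0 hy0C
      rw [hg x] at this
      nlinarith
    · intro hx
      by_contra hxC
      have h2 := hy0max x (Finset.mem_sdiff.mpr ⟨Finset.mem_univ x, hxC⟩)
      rw [hg x] at h2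
      nlinarith
  obtain ⟨η, n, hnp, harc⟩ := cos_superlevel_arc (p := p) hp.one_lt
    ((σ * (starRingEnd ℂ) (ec p y0)).re / ‖σ‖) φ
  rw [harc] at hCfilter
  have hcard : n = a := by
    rw [hCfilter, arc_card η hnp] at hC
    exact hC
  exact ⟨η, by rw [hCfilter, hcard]⟩

end Extremal
-- Packaged extremal inequality and AP rigidity
section Pack
open Real
variable {p : ℕ}

lemma esum_le (hp : p.Prime) {a : ℕ} (ha0 : 0 < a) (hap : a < p) :
    (∀ B : Finset (ZMod p), B.card = a → ‖esum p B‖ ≤ ‖esum p (initInterval p a)‖) ∧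
    (∀ B : Finset (ZMod p), B.card = a → ‖esum p B‖ = ‖esum p (initInterval p a)‖ →
      ∃ η, B = (Finset.range a).image (fun j : ℕ => η + (j : ZMod p))) := by
  haveI : NeZero p := ⟨hp.pos.ne'⟩
  have hne : (Finset.powersetCard a (Finset.univ : Finset (ZMod p))).Nonempty := by
    rw [Finset.powersetCard_nonempty, Finset.card_univ, ZMod.card]
    omega
  obtain ⟨C, hCmem, hCmax⟩ := Finset.exists_max_image _ (fun B => ‖esum p B‖) hne
  have hCcard : C.card = a := (Finset.mem_powersetCard_univ.mp hCmem)
  have hmax' : ∀ B : Finset (ZMod p), B.card = a → ‖esum p B‖ ≤ ‖esum p C‖ :=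
    fun B hB => hCmax B (Finset.mem_powersetCard_univ.mpr hB)
  obtain ⟨η, hCarc⟩ := maximal_is_arc hp ha0 hap hCcard hmax'
  have hCnorm : ‖esum p C‖ = ‖esum p (initInterval p a)‖ := by
    rw [hCarc, esum_arc_norm (le_of_lt hap)]
  constructor
  · intro B hB
    rw [← hCnorm]
    exact hmax' B hB
  · intro B hB hBnorm
    apply maximal_is_arc hp ha0 hap hB
    intro B' hB'
    rw [hBnorm, ← hCnorm]
    exact hmax' B' hB'

lemma ap_diff (hp : p.Prime) {a : ℕ} (ha3 : 3 ≤ a) (hap3 : a + 3 ≤ p) {c d : ZMod p}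
    (h : initInterval p a = (Finset.range a).image (fun j : ℕ => c + d * (j : ZMod p))) :
    d = 1 ∨ d = -1 := by
  haveI : Fact p.Prime := ⟨hp⟩
  haveI : NeZero p := ⟨hp.pos.ne'⟩
  have hap : a < p := by omega
  have hcard : (initInterval p a).card = a := initInterval_card (le_of_lt hap)
  -- d ≠ 0
  have hd0 : d ≠ 0 := by
    intro hd
    rw [hd] at h
    simp only [zero_mul, add_zero] at h
    have hne : (Finset.range a).Nonempty := Finset.nonempty_range_iff.mpr (by omega)
    rw [Finset.image_const hne] at h
    have := congrArg Finset.card h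
    rw [hcard, Finset.card_singleton] at this
    omega
  have hdv1 : 1 ≤ d.val := by
    have hne : d.val ≠ 0 := fun h0 => hd0 ((ZMod.val_eq_zero d).mp h0)
    omega
  have hdvp : d.val < p := ZMod.val_lt d
  have hdcast : ((d.val : ℕ) : ZMod p) = d := by
    rw [ZMod.natCast_val, ZMod.cast_id]
  have hII : initInterval p a = (Finset.range a).image (fun j : ℕ => (j : ZMod p)) := rfl
  have hmemS : ∀ m : ℕ, ((m : ZMod p) ∈ initInterval p a ↔ m % p < a) := by
    intro m
    rw [hII, Finset.mem_image]
    constructor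
    · rintro ⟨i', hi', hci⟩
      have hi'a : i' < a := Finset.mem_range.mp hi'
      have hmod : i' % p = m % p := (ZMod.natCast_eq_natCast_iff _ _ _).mp hci
      rw [Nat.mod_eq_of_lt (by omega)] at hmod
      omega
    · intro hm
      exact ⟨m % p, Finset.mem_range.mpr hm,
        (ZMod.natCast_eq_natCast_iff _ _ _).mpr (Nat.mod_modEq m p)⟩
  -- interval-side count
  have hNB : (Finset.filter (fun x => x + d ∈ initInterval p a) (initInterval p a)).card =
      (a - d.val) + (a - (p - d.val)) := by
    conv_lhs => rw [hII, Finset.filter_image]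
    simp only [← hII]
    have hinj : Set.InjOn (fun i : ℕ => (i : ZMod p))
        ↑((Finset.range a).filter (fun i : ℕ => ((i : ZMod p) + d ∈ initInterval p a))) := by
      intro i hi i' hi' hii
      simp only [Finset.coe_filter, Set.mem_setOf_eq, Finset.mem_range] at hi hi'
      exact natCast_injOn_lt (by omega) (by omega) hii
    rw [Finset.card_image_of_injOn hinj]
    have hcond : ∀ i : ℕ, ((i : ZMod p) + d ∈ initInterval p a) ↔ (i + d.val) % p < a := by
      intro i
      rw [show (i : ZMod p) + d = ((i + d.val : ℕ) : ZMod p) by rw [Nat.cast_add, hdcast], hmemS]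
    have hsplit : (Finset.range a).filter (fun i : ℕ => ((i : ZMod p) + d ∈ initInterval p a)) =
        (Finset.range (a - d.val)) ∪ (Finset.Ico (p - d.val) a) := by
      ext i
      simp only [Finset.mem_filter, Finset.mem_range, Finset.mem_union, Finset.mem_Ico]
      rw [hcond i]
      constructor
      · rintro ⟨hia, hmod⟩
        by_cases hip : i + d.val < p
        · rw [Nat.mod_eq_of_lt hip] at hmod
          left; omega
        · push_neg at hip
          have hm2 : (i + d.val) % p = i + d.val - p := by
            rw [Nat.mod_eq_sub_mod hip, Nat.mod_eq_of_lt (by omega)]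
          rw [hm2] at hmod
          right; omega
      · rintro (hi1 | ⟨hi1, hi2⟩)
        · have hip : i + d.val < p := by omega
          rw [Nat.mod_eq_of_lt hip]
          omega
        · have hip : p ≤ i + d.val := by omega
          have hm2 : (i + d.val) % p = i + d.val - p := by
            rw [Nat.mod_eq_sub_mod hip, Nat.mod_eq_of_lt (by omega)]
          rw [hm2]
          omega
    rw [hsplit, Finset.card_union_of_disjoint, Finset.card_range, Nat.card_Ico]
    rw [Finset.disjoint_left]
    intro i hi1 hi2
    simp only [Finset.mem_range] at hi1
    simp only [Finset.mem_Ico] at hi2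
    omega
  -- AP-side count
  have hNA : (Finset.filter (fun x => x + d ∈ initInterval p a) (initInterval p a)).card =
      a - 1 := by
    have hinjf : ∀ {i i' : ℕ}, i < p → i' < p →
        c + d * (i : ZMod p) = c + d * (i' : ZMod p) → i = i' := by
      intro i i' hi hi' hii
      have h2 : d * ((i : ZMod p) - (i' : ZMod p)) = 0 := by linear_combination hii
      rcases mul_eq_zero.mp h2 with h' | h'
      · exact absurd h' hd0
      · exact natCast_injOn_lt hi hi' (sub_eq_zero.mp h')
    conv_lhs => rw [h, Finset.filter_image]
    simp only [← h]
    have hinj : Set.InjOn (fun j : ℕ => c + d * (j : ZMod p))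
        ↑((Finset.range a).filter
          (fun j : ℕ => (c + d * (j : ZMod p) + d ∈ initInterval p a))) := by
      intro i hi i' hi' hii
      simp only [Finset.coe_filter, Set.mem_setOf_eq, Finset.mem_range] at hi hi'
      exact hinjf (by omega) (by omega) hii
    rw [Finset.card_image_of_injOn hinj]
    have hfilt2 : (Finset.range a).filter
        (fun j : ℕ => (c + d * (j : ZMod p) + d ∈ initInterval p a)) = Finset.range (a - 1) := by
      ext j
      simp only [Finset.mem_filter, Finset.mem_range]
      constructor
      · rintro ⟨hja, hmem⟩
        rw [h, Finset.mem_image] at hmem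
        obtain ⟨j', hj', hjj⟩ := hmem
        have hj'a : j' < a := Finset.mem_range.mp hj'
        have hstep : c + d * (j : ZMod p) + d = c + d * ((j + 1 : ℕ) : ZMod p) := by
          push_cast
          ring
        rw [hstep] at hjj
        have := hinjf (by omega) (by omega : j + 1 < p) hjj
        omega
      · intro hj
        refine ⟨by omega, ?_⟩
        rw [h, Finset.mem_image]
        refine ⟨j + 1, Finset.mem_range.mpr (by omega), ?_⟩
        push_cast
        ring
    rw [hfilt2, Finset.card_range]
  -- conclude
  have hdvcase : d.val = 1 ∨ d.val = p - 1 := by omega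
  rcases hdvcase with h1 | h1
  · left
    rw [← hdcast, h1, Nat.cast_one]
  · right
    rw [← hdcast, h1]
    have h2 : ((p - 1 : ℕ) : ZMod p) = (p : ZMod p) - 1 := by
      push_cast [Nat.cast_sub (by omega : 1 ≤ p)]
      ring
    rw [h2, ZMod.natCast_self]
    ring

end Pack
-- Phase computation for the interval
section Phase
open Real
variable {p : ℕ}

lemma exp_helper_add (x y : ℝ) :
    Complex.exp ((x:ℂ) * Complex.I) * Complex.exp ((y:ℂ) * Complex.I) =
      Complex.exp (((x+y:ℝ):ℂ) * Complex.I) := by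
  rw [← Complex.exp_add]
  congr 1
  push_cast
  ring

lemma exp_helper_diff (x : ℝ) :
    Complex.exp ((x:ℂ) * Complex.I) - Complex.exp (((-x:ℝ):ℂ) * Complex.I) =
      2 * (Real.sin x : ℂ) * Complex.I := by
  rw [Complex.exp_mul_I, Complex.exp_mul_I]
  push_cast
  rw [Complex.cos_neg, Complex.sin_neg]
  ring

lemma zet_exp (hp : p ≠ 0) : zet p = Complex.exp (((2*π/p : ℝ):ℂ) * Complex.I) := by
  unfold zet
  congr 1
  have hpne : (p:ℂ) ≠ 0 := Nat.cast_ne_zero.mpr hp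
  push_cast
  field_simp

lemma zet_pow_exp (hp : p ≠ 0) (n : ℕ) :
    zet p ^ n = Complex.exp (((2*π*n/p : ℝ):ℂ) * Complex.I) := by
  rw [zet_exp hp, ← Complex.exp_nat_mul]
  congr 1
  push_cast
  ring

lemma interval_phase (hp : p.Prime) {a : ℕ} (ha0 : 0 < a) (hap : a < p) :
    esum p (initInterval p a) =
      ((Real.sin (π*a/p) / Real.sin (π/p) : ℝ) : ℂ) *
        Complex.exp (((π*((a:ℝ)-1)/p : ℝ):ℂ) * Complex.I) := by
  have hppos : (0:ℝ) < p := by exact_mod_cast hp.pos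
  have hsinp : 0 < Real.sin (π/p) := by
    apply Real.sin_pos_of_pos_of_lt_pi
    · positivity
    · rw [div_lt_iff₀ hppos]
      have h1 : (1:ℝ) < p := by exact_mod_cast hp.one_lt
      nlinarith [Real.pi_pos, mul_lt_mul_of_pos_left h1 Real.pi_pos]
  have hsina : 0 < Real.sin (π*a/p) := by
    apply Real.sin_pos_of_pos_of_lt_pi
    · have : (0:ℝ) < (a:ℝ) := by exact_mod_cast ha0
      positivity
    · rw [div_lt_iff₀ hppos]
      have : (a:ℝ) < p := by exact_mod_cast hap
      nlinarith [Real.pi_pos]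
  have hzne : zet p - 1 ≠ 0 := by
    rw [sub_ne_zero]
    have := (zet_prim p hp.pos.ne').pow_ne_one_of_pos_of_lt one_ne_zero hp.one_lt
    rwa [pow_one] at this
  apply mul_right_cancel₀ hzne
  rw [esum_initInterval (le_of_lt hap), geom_sum_mul]
  have hfact_a : zet p ^ a - 1 =
      Complex.exp (((π*a/p : ℝ):ℂ) * Complex.I) * (2 * (Real.sin (π*a/p) : ℂ) * Complex.I) := by
    rw [zet_pow_exp hp.pos.ne' a, ← exp_helper_diff (π*a/p), mul_sub, exp_helper_add,
      exp_helper_add]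
    have e1 : π*a/p + π*a/p = 2*π*a/p := by ring
    have e2 : π*a/p + -(π*a/p) = 0 := by ring
    rw [e1, e2]
    norm_num
  have hfact_1 : zet p - 1 =
      Complex.exp (((π/p : ℝ):ℂ) * Complex.I) * (2 * (Real.sin (π/p) : ℂ) * Complex.I) := by
    have h1 : zet p = zet p ^ 1 := (pow_one _).symm
    rw [h1, zet_pow_exp hp.pos.ne' 1, ← exp_helper_diff (π/p), mul_sub, exp_helper_add,
      exp_helper_add]
    have e1 : π/p + π/p = 2*π*(1:ℕ)/p := by push_cast; ring
    have e2 : π/p + -(π/p) = 0 := by ring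
    rw [e1, e2]
    norm_num
  rw [hfact_a, hfact_1]
  have hω : Complex.exp (((π*((a:ℝ)-1)/p : ℝ):ℂ) * Complex.I) *
      Complex.exp (((π/p : ℝ):ℂ) * Complex.I) =
      Complex.exp (((π*a/p : ℝ):ℂ) * Complex.I) := by
    rw [exp_helper_add]
    congr 2
    push_cast
    ring
  have hcs : ((Real.sin (π*a/p) / Real.sin (π/p) : ℝ) : ℂ) * ((Real.sin (π/p) : ℝ) : ℂ) =
      ((Real.sin (π*a/p) : ℝ) : ℂ) := by
    rw [← Complex.ofReal_mul, div_mul_cancel₀ _ (ne_of_gt hsinp)]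
  rw [← hω, ← hcs]
  ring

lemma interval_norm (hp : p.Prime) {a : ℕ} (ha0 : 0 < a) (hap : a < p) :
    ‖esum p (initInterval p a)‖ = Real.sin (π*a/p) / Real.sin (π/p) := by
  have hppos : (0:ℝ) < p := by exact_mod_cast hp.pos
  have hsinp : 0 < Real.sin (π/p) := by
    apply Real.sin_pos_of_pos_of_lt_pi
    · positivity
    · rw [div_lt_iff₀ hppos]
      have h1 : (1:ℝ) < p := by exact_mod_cast hp.one_lt
      nlinarith [Real.pi_pos, mul_lt_mul_of_pos_left h1 Real.pi_pos]
  have hsina : 0 < Real.sin (π*a/p) := by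
    apply Real.sin_pos_of_pos_of_lt_pi
    · have : (0:ℝ) < (a:ℝ) := by exact_mod_cast ha0
      positivity
    · rw [div_lt_iff₀ hppos]
      have : (a:ℝ) < p := by exact_mod_cast hap
      nlinarith [Real.pi_pos]
  rw [interval_phase hp ha0 hap, norm_mul, Complex.norm_exp_ofReal_mul_I, mul_one,
    Complex.norm_real, Real.norm_eq_abs, abs_of_pos (by positivity)]

lemma omega_pow_p (hp : p.Prime) {a : ℕ} (ha0 : 0 < a) (haeven : Even a) :
    (Complex.exp (((π*((a:ℝ)-1)/p : ℝ):ℂ) * Complex.I)) ^ p = -1 := by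
  have hpne : (p:ℂ) ≠ 0 := Nat.cast_ne_zero.mpr hp.pos.ne'
  rw [← Complex.exp_nat_mul]
  have h1 : (p:ℂ) * ((((π*((a:ℝ)-1)/p : ℝ)):ℂ) * Complex.I) =
      (((a - 1 : ℕ) : ℂ)) * ((π:ℝ) * Complex.I) := by
    have hcast : (((a - 1 : ℕ)) : ℂ) = ((a:ℂ) - 1) := by
      push_cast [Nat.cast_sub (by omega : 1 ≤ a)]
      ring
    rw [hcast]
    push_cast
    field_simp
  rw [h1, Complex.exp_nat_mul]
  have h2 : Complex.exp ((π:ℝ) * Complex.I) = -1 := by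
    exact_mod_cast Complex.exp_pi_mul_I
  rw [h2]
  exact Odd.neg_one_pow (Nat.Even.sub_odd (by omega) haeven odd_one)

lemma z_pow_keyc (hp : p.Prime) (hp2 : 2 < p) {a : ℕ} (ha0 : 0 < a) (hap : a < p)
    (haeven : Even a) {k : ℕ} (hk2 : 2 ≤ k) (hkeven : Even k) (hkmod : k ≡ 1 [MOD p]) :
    (esum p (initInterval p a)) ^ (k - 1) =
      -(((Real.sin (π*a/p) / Real.sin (π/p) : ℝ) : ℂ)) ^ (k - 1) := by
  obtain ⟨m, hm⟩ := (Nat.modEq_iff_dvd' (by omega : 1 ≤ k)).mp hkmod.symm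
  have hkodd : Odd (k - 1) := Nat.Even.sub_odd (by omega) hkeven odd_one
  have hmodd : Odd m := by
    rw [hm] at hkodd
    exact (Nat.odd_mul.mp hkodd).2
  rw [interval_phase hp ha0 hap, mul_pow, hm, pow_mul, pow_mul, omega_pow_p hp ha0 haeven,
    Odd.neg_one_pow hmodd]
  ring

end Phase
-- Endgame helpers
section Helpers
open Real
variable {p : ℕ}

lemma Fc_zero [NeZero p] (A : Finset (ZMod p)) : Fc A 0 = (A.card : ℂ) := by
  unfold Fc
  simp [ec_zero]

lemma Fc_one (A : Finset (ZMod p)) : Fc A 1 = esum p A := by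
  unfold Fc esum
  simp

lemma Fc_neg_one [NeZero p] (A : Finset (ZMod p)) :
    Fc A (-1) = (starRingEnd ℂ) (esum p A) := by
  unfold Fc esum
  rw [map_sum]
  refine Finset.sum_congr rfl (fun x _ => ?_)
  rw [← ec_neg]
  congr 1
  ring

lemma Fc_esum_image (hp : p.Prime) {t : ZMod p} (ht : t ≠ 0) (A : Finset (ZMod p)) :
    Fc A t = esum p (A.image (fun x => t * x)) := by
  haveI : Fact p.Prime := ⟨hp⟩
  unfold Fc esum
  rw [Finset.sum_image]
  intro x _ y _ h
  exact mul_left_cancel₀ ht h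

lemma card_image_mul (hp : p.Prime) {t : ZMod p} (ht : t ≠ 0) (A : Finset (ZMod p)) :
    (A.image (fun x => t * x)).card = A.card := by
  haveI : Fact p.Prime := ⟨hp⟩
  apply Finset.card_image_of_injective
  intro x y h
  exact mul_left_cancel₀ ht h

lemma norm_term_le {ρ : ℝ} (hρ0 : 0 ≤ ρ) {B : Finset (ZMod p)} {t : ZMod p} {k : ℕ}
    (h1 : ‖Fc B t‖ ≤ ρ) (h2 : ‖Fc B (-t)‖ ≤ ρ) :
    ‖Fc B t ^ k * Fc B (-t)‖ ≤ ρ ^ (k + 1) := by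
  rw [norm_mul, norm_pow, pow_succ]
  exact mul_le_mul (pow_le_pow_left₀ (norm_nonneg _) h1 k) h2 (norm_nonneg _)
    (pow_nonneg hρ0 k)

lemma neg_one_ne_one' (hp7 : 7 ≤ p) : (-1 : ZMod p) ≠ 1 := by
  haveI : NeZero p := ⟨by omega⟩
  intro h
  have h2 : ((2:ℕ) : ZMod p) = 0 := by
    push_cast
    linear_combination -h
  rw [ZMod.natCast_eq_zero_iff] at h2
  have := Nat.le_of_dvd (by norm_num) h2
  omega

lemma zmod_one_ne_zero (hp7 : 7 ≤ p) : (1 : ZMod p) ≠ 0 := by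
  haveI : NeZero p := ⟨by omega⟩
  intro h
  have h2 : ((1:ℕ) : ZMod p) = 0 := by push_cast; exact h
  rw [ZMod.natCast_eq_zero_iff] at h2
  have := Nat.le_of_dvd (by norm_num) h2
  omega

lemma sum_split_three [NeZero p] (hp7 : 7 ≤ p) (f : ZMod p → ℂ) :
    ∑ t : ZMod p, f t = f 0 + f 1 + f (-1) +
      ∑ t ∈ ((Finset.univ.erase (0 : ZMod p)).erase 1).erase (-1), f t := by
  have h10 : (1 : ZMod p) ∈ Finset.univ.erase (0 : ZMod p) :=
    Finset.mem_erase.mpr ⟨zmod_one_ne_zero hp7, Finset.mem_univ _⟩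
  have hm1 : (-1 : ZMod p) ∈ (Finset.univ.erase (0 : ZMod p)).erase 1 := by
    refine Finset.mem_erase.mpr ⟨neg_one_ne_one' hp7, Finset.mem_erase.mpr ⟨?_, Finset.mem_univ _⟩⟩
    intro h
    exact zmod_one_ne_zero hp7 (by linear_combination -h)
  rw [← Finset.add_sum_erase _ f (Finset.mem_univ (0 : ZMod p)),
    ← Finset.add_sum_erase _ f h10, ← Finset.add_sum_erase _ f hm1]
  ring

lemma card_S3 [NeZero p] (hp7 : 7 ≤ p) :
    (((Finset.univ.erase (0 : ZMod p)).erase 1).erase (-1)).card = p - 3 := by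
  have h10 : (1 : ZMod p) ∈ Finset.univ.erase (0 : ZMod p) :=
    Finset.mem_erase.mpr ⟨zmod_one_ne_zero hp7, Finset.mem_univ _⟩
  have hm1 : (-1 : ZMod p) ∈ (Finset.univ.erase (0 : ZMod p)).erase 1 := by
    refine Finset.mem_erase.mpr ⟨neg_one_ne_one' hp7, Finset.mem_erase.mpr ⟨?_, Finset.mem_univ _⟩⟩
    intro h
    exact zmod_one_ne_zero hp7 (by linear_combination -h)
  rw [Finset.card_erase_of_mem hm1, Finset.card_erase_of_mem h10,
    Finset.card_erase_of_mem (Finset.mem_univ _), Finset.card_univ, ZMod.card]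
  omega

/-- From an arc representation of a dilate, get affine equivalence with the interval. -/
lemma dilate_arc_equiv (hp : p.Prime) {a : ℕ} {t : ZMod p} (ht : t ≠ 0)
    {B : Finset (ZMod p)} {η : ZMod p}
    (h : B.image (fun x => t * x) = (Finset.range a).image (fun j : ℕ => η + (j : ZMod p))) :
    ∃ ξ η' : ZMod p, ξ ≠ 0 ∧ (initInterval p a).image (fun x => ξ * x + η') = B := by
  haveI : Fact p.Prime := ⟨hp⟩
  refine ⟨t⁻¹, t⁻¹ * η, inv_ne_zero ht, ?_⟩
  have hB : B = (B.image (fun x => t * x)).image (fun x => t⁻¹ * x) := by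
    rw [Finset.image_image]
    have : ((fun x => t⁻¹ * x) ∘ (fun x => t * x)) = id := by
      funext x
      simp [Function.comp]
      field_simp
    rw [this, Finset.image_id]
  rw [hB, h]
  unfold initInterval
  rw [Finset.image_image, Finset.image_image]
  congr 1
  funext j
  simp [Function.comp]
  ring

end Helpers
open Real in
theorem stmt_15 (p : ℕ) (hp : p.Prime) (hp7 : 7 ≤ p)
    (a : ℕ) (ha : 3 ≤ a) (ha' : a ≤ p - 3) (haeven : Even a) :
    ∃ k0 : ℕ, ∀ k : ℕ, k0 ≤ k → Even k → k ≡ 1 [MOD p] →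
      ∀ A : Finset (ZMod p), A.card = a →
        ((∀ B : Finset (ZMod p), B.card = a → skcount k A ≤ skcount k B) ↔
          ∃ ξ η : ZMod p, ξ ≠ 0 ∧ (initInterval p a).image (fun x => ξ * x + η) = A) := by
  classical
  haveI : Fact p.Prime := ⟨hp⟩
  haveI : NeZero p := ⟨hp.pos.ne'⟩
  have hap : a < p := by omega
  have hap3 : a + 3 ≤ p := by omega
  have ha0 : 0 < a := by omega
  have hIcard : (initInterval p a).card = a := initInterval_card (le_of_lt hap)
  set Rr := Real.sin (π*a/p) / Real.sin (π/p) with hRrdef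
  have hnorm : ‖esum p (initInterval p a)‖ = Rr := interval_norm hp ha0 hap
  have hRrpos : 0 < Rr := by
    rw [← hnorm]
    exact norm_pos_iff.mpr (esum_init_ne_zero hp.pos.ne' ha0 hap)
  -- bad pairs and the spectral gap ρ
  set Bad : Finset (Finset (ZMod p) × ZMod p) :=
    ((Finset.powersetCard a Finset.univ) ×ˢ Finset.univ).filter
      (fun q => q.2 ≠ 0 ∧ ¬ ∃ η : ZMod p, q.1.image (fun x => q.2 * x) =
        (Finset.range a).image (fun j : ℕ => η + (j : ZMod p))) with hBadDef
  set V : Finset ℝ := insert 0 (Bad.image (fun q => ‖Fc q.1 q.2‖)) with hVdef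
  have hVne : V.Nonempty := ⟨0, Finset.mem_insert_self _ _⟩
  set ρ := V.max' hVne with hρdef
  have hρ0 : 0 ≤ ρ := Finset.le_max' V 0 (Finset.mem_insert_self _ _)
  have hρle : ∀ B : Finset (ZMod p), B.card = a → ∀ t : ZMod p, t ≠ 0 →
      (¬ ∃ η : ZMod p, B.image (fun x => t * x) =
        (Finset.range a).image (fun j : ℕ => η + (j : ZMod p))) → ‖Fc B t‖ ≤ ρ := by
    intro B hB t ht hnot
    apply Finset.le_max'
    apply Finset.mem_insert_of_mem
    exact Finset.mem_image.mpr ⟨(B, t), Finset.mem_filter.mpr ⟨Finset.mem_product.mpr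
      ⟨Finset.mem_powersetCard_univ.mpr hB, Finset.mem_univ _⟩, ht, hnot⟩, rfl⟩
  have hρlt : ρ < Rr := by
    rw [hρdef, Finset.max'_lt_iff]
    intro y hy
    rcases Finset.mem_insert.mp hy with h0 | hmem
    · rw [h0]; exact hRrpos
    · obtain ⟨⟨B, t⟩, hq, rfl⟩ := Finset.mem_image.mp hmem
      obtain ⟨hqmem, ht, hnot⟩ := Finset.mem_filter.mp hq
      have hBcard : B.card = a :=
        Finset.mem_powersetCard_univ.mp (Finset.mem_product.mp hqmem).1
      have himgcard : (B.image (fun x => t * x)).card = a := by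
        rw [card_image_mul hp ht, hBcard]
      have hle : ‖Fc B t‖ ≤ Rr := by
        rw [Fc_esum_image hp ht, ← hnorm]
        exact (esum_le hp ha0 hap).1 _ himgcard
      rcases lt_or_eq_of_le hle with h | h
      · exact h
      · exact absurd ((esum_le hp ha0 hap).2 _ himgcard
          (by rw [← Fc_esum_image hp ht, h, hnorm])) hnot
  -- dilates of the interval by t ∉ {0,1,-1} fall below the gap
  have hIρ : ∀ t : ZMod p, t ≠ 0 → t ≠ 1 → t ≠ -1 → ‖Fc (initInterval p a) t‖ ≤ ρ := by
    intro t ht ht1 htm1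
    apply hρle _ hIcard t ht
    rintro ⟨η, harc⟩
    have hI2 : initInterval p a =
        ((initInterval p a).image (fun x => t * x)).image (fun x => t⁻¹ * x) := by
      rw [Finset.image_image]
      have hcomp : ((fun x : ZMod p => t⁻¹ * x) ∘ (fun x => t * x)) = id := by
        funext x
        simp only [Function.comp_apply, id_eq]
        field_simp
      rw [hcomp, Finset.image_id]
    have hI3 : initInterval p a =
        (Finset.range a).image (fun j : ℕ => t⁻¹ * η + t⁻¹ * (j : ZMod p)) := by
      rw [hI2, harc, Finset.image_image]
      congr 1
      funext j
      simp [Function.comp]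
      ring
    rcases ap_diff hp ha hap3 hI3 with h1 | h1
    · exact ht1 (by rw [← inv_inv t, h1, inv_one])
    · exact htm1 (by rw [← inv_inv t, h1, inv_neg, inv_one])
  -- choose k0
  have hq1 : ρ / Rr < 1 := (div_lt_one hRrpos).mpr hρlt
  have hq0 : 0 ≤ ρ / Rr := div_nonneg hρ0 (le_of_lt hRrpos)
  have hppos : (0:ℝ) < p := by exact_mod_cast hp.pos
  obtain ⟨n0, hn0⟩ := exists_pow_lt_of_lt_one (show (0:ℝ) < 1/p by positivity) hq1
  refine ⟨max n0 2, ?_⟩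
  intro k hk hkeven hkmod A hA
  have hk2 : 2 ≤ k := le_trans (le_max_right _ _) hk
  have hkn0 : n0 ≤ k + 1 := by
    have := le_trans (le_max_left _ _) hk
    omega
  have hkcast : (k : ZMod p) = 1 := by
    have := (ZMod.natCast_eq_natCast_iff k 1 p).mpr hkmod
    rwa [Nat.cast_one] at this
  -- the quantitative gap
  have hqk : (ρ/Rr)^(k+1) < 1/p :=
    lt_of_le_of_lt (pow_le_pow_of_le_one hq0 (le_of_lt hq1) hkn0) hn0
  have hρpow : ρ^(k+1) = (ρ/Rr)^(k+1) * Rr^(k+1) := by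
    rw [← mul_pow, div_mul_cancel₀ _ (ne_of_gt hRrpos)]
  have hgap : ((p:ℝ)-1)*ρ^(k+1) + ((p:ℝ)-3)*ρ^(k+1) < 2*Rr^(k+1) := by
    have hx : (p:ℝ) * (ρ/Rr)^(k+1) < 1 := by
      have h := (lt_div_iff₀ hppos).mp hqk
      linarith [h]
    have hRp : (0:ℝ) < Rr^(k+1) := pow_pos hRrpos _
    have hqnn : (0:ℝ) ≤ (ρ/Rr)^(k+1) := pow_nonneg hq0 _
    have h1 : (p:ℝ)*(ρ/Rr)^(k+1)*Rr^(k+1) < Rr^(k+1) := by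
      nlinarith [mul_lt_mul_of_pos_right hx hRp]
    nlinarith [h1, mul_nonneg hqnn hRp.le, hρpow, hppos]
  -- notation for the residual index set
  set S3 := ((Finset.univ.erase (0 : ZMod p)).erase 1).erase (-1) with hS3def
  have hS3mem : ∀ t ∈ S3, t ≠ 0 ∧ t ≠ 1 ∧ t ≠ -1 := by
    intro t ht
    obtain ⟨h1, h2⟩ := Finset.mem_erase.mp ht
    obtain ⟨h3, h4⟩ := Finset.mem_erase.mp h2
    obtain ⟨h5, _⟩ := Finset.mem_erase.mp h4
    exact ⟨h5, h3, h1⟩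
  have hcastP3 : (((p - 3 : ℕ)) : ℝ) = (p:ℝ) - 3 := by
    push_cast [Nat.cast_sub (by omega : 3 ≤ p)]
    ring
  -- lower bound for non-equivalent sets
  have hlow : ∀ B : Finset (ZMod p), B.card = a →
      (¬ ∃ ξ η : ZMod p, ξ ≠ 0 ∧ (initInterval p a).image (fun x => ξ * x + η) = B) →
      (a:ℝ)^(k+1) - ((p:ℝ)-1)*ρ^(k+1) ≤ (p:ℝ) * (skcount k B) := by
    intro B hB hnot
    have hBρ : ∀ t : ZMod p, t ≠ 0 → ‖Fc B t‖ ≤ ρ := by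
      intro t ht
      apply hρle B hB t ht
      rintro ⟨η, harc⟩
      exact hnot (dilate_arc_equiv hp ht harc)
    have hterm : ∀ t : ZMod p, t ≠ 0 → ‖Fc B t ^ k * Fc B (-t)‖ ≤ ρ^(k+1) :=
      fun t ht => norm_term_le hρ0 (hBρ t ht) (hBρ (-t) (neg_ne_zero.mpr ht))
    have hid := fourier_identity hp k B
    rw [sum_split_three hp7 (fun t => Fc B t ^ k * Fc B (-t))] at hid
    have hf0 : Fc B 0 ^ k * Fc B (-0) = (a:ℂ)^(k+1) := by
      rw [neg_zero, Fc_zero, hB, ← pow_succ]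
    rw [hf0] at hid
    have hdiff : (p:ℂ) * (skcount k B : ℂ) - (a:ℂ)^(k+1) =
        Fc B 1 ^ k * Fc B (-1) + Fc B (-1) ^ k * Fc B (-(-1)) +
          ∑ t ∈ S3, Fc B t ^ k * Fc B (-t) := by
      rw [hid]; ring
    have hsum3 : ‖∑ t ∈ S3, Fc B t ^ k * Fc B (-t)‖ ≤ ((p:ℝ)-3) * ρ^(k+1) := by
      refine le_trans (norm_sum_le _ _) ?_
      refine le_trans (Finset.sum_le_card_nsmul _ _ (ρ^(k+1))
        (fun t ht => hterm t (hS3mem t ht).1)) ?_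
      rw [hS3def, card_S3 hp7, nsmul_eq_mul, hcastP3]
    have hnb : ‖(p:ℂ) * (skcount k B : ℂ) - (a:ℂ)^(k+1)‖ ≤ ((p:ℝ)-1) * ρ^(k+1) := by
      rw [hdiff]
      refine le_trans (norm_add_le _ _) ?_
      refine le_trans (add_le_add (norm_add_le _ _) (le_refl _)) ?_
      have h1 := hterm 1 (zmod_one_ne_zero hp7)
      have h2 := hterm (-1) (neg_ne_zero.mpr (zmod_one_ne_zero hp7))
      have h3 := hsum3
      nlinarith [h1, h2, h3]
    have habs : |(p:ℝ) * (skcount k B : ℝ) - (a:ℝ)^(k+1)| ≤ ((p:ℝ)-1) * ρ^(k+1) := by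
      have hc2 : ((p:ℂ) * (skcount k B : ℂ) - (a:ℂ)^(k+1)) =
          (((p:ℝ) * (skcount k B : ℝ) - (a:ℝ)^(k+1) : ℝ) : ℂ) := by
        push_cast
        ring
      have h3 : ‖(((p:ℝ) * (skcount k B : ℝ) - (a:ℝ)^(k+1) : ℝ) : ℂ)‖ ≤ ((p:ℝ)-1) * ρ^(k+1) := by
        rw [← hc2]
        exact hnb
      rwa [Complex.norm_real, Real.norm_eq_abs] at h3
    have := (abs_le.mp habs).1
    linarith
  -- upper bound for the interval
  have hupp : (p:ℝ) * (skcount k (initInterval p a)) ≤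
      (a:ℝ)^(k+1) - 2*Rr^(k+1) + ((p:ℝ)-3)*ρ^(k+1) := by
    have hid := fourier_identity hp k (initInterval p a)
    rw [sum_split_three hp7 (fun t => Fc (initInterval p a) t ^ k *
      Fc (initInterval p a) (-t))] at hid
    have hf0 : Fc (initInterval p a) 0 ^ k * Fc (initInterval p a) (-0) = (a:ℂ)^(k+1) := by
      rw [neg_zero, Fc_zero, hIcard, ← pow_succ]
    rw [hf0] at hid
    have hkk : k - 1 + 2 = k + 1 := by omega
    have hf1 : Fc (initInterval p a) 1 ^ k * Fc (initInterval p a) (-1) =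
        -((Rr^(k+1) : ℝ) : ℂ) := by
      rw [Fc_one, Fc_neg_one]
      have hzk : esum p (initInterval p a) ^ k =
          esum p (initInterval p a) ^ (k-1) * esum p (initInterval p a) := by
        rw [← pow_succ]
        congr 1
        omega
      rw [hzk, mul_assoc, Complex.mul_conj,
        z_pow_keyc hp (by omega) ha0 hap haeven hk2 hkeven hkmod,
        Complex.normSq_eq_norm_sq, hnorm,
        Complex.ofReal_pow, Complex.ofReal_pow, neg_mul, ← pow_add, hkk]
    have hfm1 : Fc (initInterval p a) (-1) ^ k * Fc (initInterval p a) (-(-1)) =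
        -((Rr^(k+1) : ℝ) : ℂ) := by
      rw [neg_neg]
      have hconj : Fc (initInterval p a) (-1) ^ k * Fc (initInterval p a) 1 =
          (starRingEnd ℂ) (Fc (initInterval p a) 1 ^ k * Fc (initInterval p a) (-1)) := by
        rw [map_mul, map_pow, Fc_neg_one, Fc_one, Complex.conj_conj]
      rw [hconj, hf1, map_neg, Complex.conj_ofReal]
    rw [hf1, hfm1] at hid
    have hterm : ∀ t ∈ S3, ‖Fc (initInterval p a) t ^ k * Fc (initInterval p a) (-t)‖ ≤
        ρ^(k+1) := by
      intro t ht
      obtain ⟨h1, h2, h3⟩ := hS3mem t ht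
      refine norm_term_le hρ0 (hIρ t h1 h2 h3) (hIρ (-t) (neg_ne_zero.mpr h1) ?_ ?_)
      · intro h
        exact h3 (by linear_combination -h)
      · intro h
        exact h2 (by linear_combination -h)
    have hsum3 : ‖∑ t ∈ S3, Fc (initInterval p a) t ^ k * Fc (initInterval p a) (-t)‖ ≤
        ((p:ℝ)-3) * ρ^(k+1) := by
      refine le_trans (norm_sum_le _ _) ?_
      refine le_trans (Finset.sum_le_card_nsmul _ _ (ρ^(k+1)) hterm) ?_
      rw [hS3def, card_S3 hp7, nsmul_eq_mul, hcastP3]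
    have hdiff : (p:ℂ) * (skcount k (initInterval p a) : ℂ) - (a:ℂ)^(k+1) +
        2*((Rr^(k+1) : ℝ) : ℂ) =
        ∑ t ∈ S3, Fc (initInterval p a) t ^ k * Fc (initInterval p a) (-t) := by
      rw [hid]; ring
    have habs : |(p:ℝ) * (skcount k (initInterval p a) : ℝ) - (a:ℝ)^(k+1) + 2*Rr^(k+1)| ≤
        ((p:ℝ)-3) * ρ^(k+1) := by
      have hc2 : ((p:ℂ) * (skcount k (initInterval p a) : ℂ) - (a:ℂ)^(k+1) +
          2*((Rr^(k+1) : ℝ) : ℂ)) =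
          (((p:ℝ) * (skcount k (initInterval p a) : ℝ) - (a:ℝ)^(k+1) + 2*Rr^(k+1) : ℝ) : ℂ) := by
        push_cast
        ring
      have h3 : ‖(((p:ℝ) * (skcount k (initInterval p a) : ℝ) - (a:ℝ)^(k+1) +
          2*Rr^(k+1) : ℝ) : ℂ)‖ ≤ ((p:ℝ)-3) * ρ^(k+1) := by
        rw [← hc2, hdiff]
        exact hsum3
      rwa [Complex.norm_real, Real.norm_eq_abs] at h3
    have := (abs_le.mp habs).2
    linarith
  -- strict comparison for non-equivalent sets
  have hstrict : ∀ B : Finset (ZMod p), B.card = a →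
      (¬ ∃ ξ η : ZMod p, ξ ≠ 0 ∧ (initInterval p a).image (fun x => ξ * x + η) = B) →
      skcount k (initInterval p a) < skcount k B := by
    intro B hB hnot
    have h1 := hlow B hB hnot
    have h2 := hupp
    have h3 : (p:ℝ) * (skcount k (initInterval p a)) < (p:ℝ) * (skcount k B) := by
      linarith [hgap]
    have h4 : ((skcount k (initInterval p a) : ℝ)) < (skcount k B : ℝ) :=
      (mul_lt_mul_iff_right₀ hppos).mp h3
    exact_mod_cast h4
  -- assemble the equivalence
  constructor
  · intro hmin
    by_contra hnot
    have h1 : skcount k (initInterval p a) < skcount k A := hstrict A hA hnot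
    have h2 : skcount k A ≤ skcount k (initInterval p a) := hmin _ hIcard
    omega
  · rintro ⟨ξ, η, hξ, hAeq⟩ B hB
    have hAI : skcount k A = skcount k (initInterval p a) := by
      rw [← hAeq]
      exact skcount_affine hp hkcast hξ (initInterval p a)
    by_cases hB2 : ∃ ξ' η' : ZMod p, ξ' ≠ 0 ∧ (initInterval p a).image (fun x => ξ' * x + η') = B
    · obtain ⟨ξ', η', hξ', hBeq⟩ := hB2
      rw [hAI, ← hBeq, skcount_affine hp hkcast hξ' (initInterval p a)]
    · have := hstrict B hB hB2
      omega
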